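/- Let m ≥ 3 be an integer, let c ∈ (0,1), and let h(t) = t^m − c·t − (1−c). Then 1 is a root of h, and every real root of h other than 1 lies in the open interval (−1, 0). If m is even, then h has exactly one real root other than 1. If m is odd, then, with c_m denoting the unique real root in (0,1) of ((m−1)^{m−1}/m^m)·t^m = (t−1)^{m−1}: h has exactly two real roots other than 1 when c > c_m; exactly one real root other than 1 (which is a double root) when c = c_m; and no real root other than 1 when c < c_m. -/

import Mathlib

open Polynomial

noncomputable section

/-- The polynomial `h(t) = t^m - c·t - (1-c)` over `ℝ`. -/
def hpolyR (m : ℕ) (c : ℝ) : Polynomial ℝ :=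
  X ^ m - C c * X - C (1 - c)

set_option linter.unusedSectionVars false

namespace Stmt9Aux

/-- The evaluation function of `hpolyR`. -/
def F (m : ℕ) (c : ℝ) : ℝ → ℝ := fun t => t ^ m - c * t - (1 - c)

lemma eval_h (m : ℕ) (c t : ℝ) : (hpolyR m c).eval t = F m c t := by
  simp [hpolyR, F]

lemma isRoot_iff (m : ℕ) (c t : ℝ) : (hpolyR m c).IsRoot t ↔ F m c t = 0 := by
  rw [IsRoot, eval_h]

lemma deriv_h (m : ℕ) (c t : ℝ) : ((hpolyR m c).derivative).eval t = m * t ^ (m - 1) - c := by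
  simp [hpolyR, derivative_X_pow]

lemma deriv2_h (m : ℕ) (hm : 1 ≤ m) (c t : ℝ) :
    ((hpolyR m c).derivative.derivative).eval t = (m : ℝ) * (((m - 1 : ℕ) : ℝ) * t ^ (m - 2)) := by
  have h : m - 1 - 1 = m - 2 := by omega
  simp [hpolyR, h, derivative_X_pow]

lemma contF (m : ℕ) (c : ℝ) : Continuous (F m c) := by
  unfold F; fun_prop

lemma hasDerivAt_F (m : ℕ) (c t : ℝ) :
    HasDerivAt (F m c) ((m : ℝ) * t ^ (m - 1) - c) t := by
  have h1 : HasDerivAt (fun x : ℝ => x ^ m) ((m : ℝ) * t ^ (m - 1)) t := hasDerivAt_pow m t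
  have h2 : HasDerivAt (fun x : ℝ => c * x) c t := by
    simpa using (hasDerivAt_id t).const_mul c
  exact (h1.sub h2).sub_const (1 - c)

lemma deriv_F (m : ℕ) (c t : ℝ) : deriv (F m c) t = (m : ℝ) * t ^ (m - 1) - c :=
  (hasDerivAt_F m c t).deriv

section
variable {m : ℕ} {c : ℝ} (hm : 3 ≤ m) (hc : c ∈ Set.Ioo (0 : ℝ) 1)
include hm hc

lemma F_neg_right {t : ℝ} (h0 : 0 ≤ t) (h1 : t < 1) : F m c t < 0 := by
  have hp : t ^ m ≤ t ^ 1 := pow_le_pow_of_le_one h0 h1.le (by omega)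
  simp only [pow_one] at hp
  have := hc.1; have := hc.2
  simp only [F]; nlinarith

lemma F_pos_gt1 {t : ℝ} (h1 : 1 < t) : 0 < F m c t := by
  have hp : t < t ^ m := lt_self_pow₀ h1 (by omega)
  have := hc.1; have := hc.2
  simp only [F]; nlinarith

lemma F_pos_left_even (hme : Even m) {t : ℝ} (ht : t ≤ -1) : 0 < F m c t := by
  have h1 : (1 : ℝ) ≤ -t := by linarith
  have hp : (1 : ℝ) ≤ t ^ m := by
    rw [← hme.neg_pow]; exact one_le_pow₀ h1
  have := hc.1; have := hc.2
  simp only [F]; nlinarith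

lemma F_neg_left_odd (hmo : Odd m) {t : ℝ} (ht : t ≤ -1) : F m c t < 0 := by
  have h1 : (1 : ℝ) ≤ -t := by linarith
  have hp : t ^ m ≤ t := by
    have := le_self_pow₀ h1 (by omega : m ≠ 0)
    have hneg : t ^ m = -((-t) ^ m) := by rw [hmo.neg_pow]; ring
    linarith [hneg ▸ (neg_le_neg this)]
  have := hc.1; have := hc.2
  simp only [F]; nlinarith

/-- Every root other than 1 lies in (-1,0). -/
lemma root_mem {t : ℝ} (ht : F m c t = 0) (ht1 : t ≠ 1) : t ∈ Set.Ioo (-1 : ℝ) 0 := by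
  constructor
  · by_contra h
    push_neg at h
    rcases Nat.even_or_odd m with hme | hmo
    · exact absurd ht (ne_of_gt (F_pos_left_even hm hc hme h))
    · exact absurd ht (ne_of_lt (F_neg_left_odd hm hc hmo h))
  · by_contra h
    push_neg at h
    rcases lt_trichotomy t 1 with h1 | h1 | h1
    · exact absurd ht (ne_of_lt (F_neg_right hm hc h h1))
    · exact ht1 h1
    · exact absurd ht (ne_of_gt (F_pos_gt1 hm hc h1))

lemma F_one : F m c 1 = 0 := by simp [F]

lemma F_zero : F m c 0 < 0 := by
  have h2 := hc.2
  have hm0 : m ≠ 0 := by omega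
  simp [F, zero_pow hm0]; linarith

end

section Even
variable {m : ℕ} {c : ℝ} (hm : 3 ≤ m) (hc : c ∈ Set.Ioo (0 : ℝ) 1) (hme : Even m)
include hm hc hme

lemma strictAntiOn_even : StrictAntiOn (F m c) (Set.Icc (-1 : ℝ) 0) := by
  apply strictAntiOn_of_deriv_neg (convex_Icc _ _) (contF m c).continuousOn
  intro x hx
  rw [interior_Icc] at hx
  rw [deriv_F]
  have hodd : Odd (m - 1) := Nat.Even.sub_odd (by omega) hme odd_one
  have hxp : x ^ (m - 1) < 0 := hodd.pow_neg hx.2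
  have hmp : (0 : ℝ) < m := by positivity
  nlinarith [hc.1]

lemma even_case : ∃! t : ℝ, t ≠ 1 ∧ (hpolyR m c).IsRoot t := by
  have hF1 : F m c (-1) = 2 * c := by
    simp [F, hme.neg_one_pow]; ring
  have hFm1pos : 0 < F m c (-1) := by rw [hF1]; linarith [hc.1]
  have h0 : F m c 0 < 0 := F_zero hm hc
  have hsub : Set.Ioo (F m c 0) (F m c (-1)) ⊆ F m c '' Set.Ioo (-1 : ℝ) 0 :=
    intermediate_value_Ioo' (by norm_num) (contF m c).continuousOn
  obtain ⟨a, haI, haF⟩ := hsub ⟨h0, hFm1pos⟩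
  have haI' : a ∈ Set.Icc (-1 : ℝ) 0 := Set.mem_Icc_of_Ioo haI
  refine ⟨a, ⟨ne_of_lt (lt_trans haI.2 one_pos), (isRoot_iff m c a).2 haF⟩, ?_⟩
  rintro t ⟨ht1, htr⟩
  rw [isRoot_iff] at htr
  have htI : t ∈ Set.Ioo (-1 : ℝ) 0 := root_mem hm hc htr ht1
  exact (strictAntiOn_even hm hc hme).injOn (Set.mem_Icc_of_Ioo htI) haI' (by rw [htr, haF])

end Even



/-- location of the critical point (as positive number `s0`; critical point is `-s0`). -/
def S0 (m : ℕ) (c : ℝ) : ℝ := (c / m) ^ (((m : ℝ) - 1)⁻¹)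

/-- `G c = F m c (-S0 m c)`, the value at the local max. -/
def G (m : ℕ) (d : ℝ) : ℝ :=
  d * ((d / m) ^ (((m : ℝ) - 1)⁻¹)) * (((m : ℝ) - 1) / m) - (1 - d)

section
variable {m : ℕ} {c : ℝ} (hm : 3 ≤ m) (hc : c ∈ Set.Ioo (0 : ℝ) 1)
include hm hc

lemma hm_pos : (0 : ℝ) < m := by positivity
lemma hcm_pos : 0 < c / m := div_pos hc.1 (hm_pos hm hc)
lemma hcm_lt1 : c / m < 1 := by
  rw [div_lt_one (hm_pos hm hc)]
  calc c < 1 := hc.2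
  _ ≤ m := by exact_mod_cast Nat.one_le_cast.mpr (by omega)

lemma hexp_pos : 0 < ((m : ℝ) - 1)⁻¹ := by
  have : (1 : ℝ) < m := by exact_mod_cast (by omega : 1 < m)
  exact inv_pos.2 (by linarith)

lemma S0_pos : 0 < S0 m c := Real.rpow_pos_of_pos (hcm_pos hm hc) _

lemma S0_lt1 : S0 m c < 1 :=
  Real.rpow_lt_one (hcm_pos hm hc).le (hcm_lt1 hm hc) (hexp_pos hm hc)

lemma S0_pow : S0 m c ^ (m - 1) = c / m := by
  have hcast : ((m - 1 : ℕ) : ℝ) = (m : ℝ) - 1 := by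
    push_cast [Nat.cast_sub (by omega : 1 ≤ m)]; ring
  rw [S0, ← Real.rpow_natCast _ (m - 1), ← Real.rpow_mul (hcm_pos hm hc).le, hcast,
    inv_mul_cancel₀ (by
      have : (1 : ℝ) < m := by exact_mod_cast (by omega : 1 < m)
      linarith), Real.rpow_one]

lemma neg_S0_mem : -S0 m c ∈ Set.Ioo (-1 : ℝ) 0 :=
  ⟨by linarith [S0_lt1 hm hc], by linarith [S0_pos hm hc]⟩

variable (hmo : Odd m)
include hmo

lemma even_m_sub_one : Even (m - 1) := Nat.Odd.sub_odd hmo odd_one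

lemma F_at_critical : F m c (-S0 m c) = G m c := by
  have hpow : (-S0 m c) ^ m = -((c / m) * S0 m c) := by
    rw [hmo.neg_pow,
      show S0 m c ^ m = S0 m c ^ (m - 1) * S0 m c by
        rw [← pow_succ, Nat.sub_add_cancel (by omega)],
      S0_pow hm hc]
  have hcast : ((m - 1 : ℕ) : ℝ) = (m : ℝ) - 1 := by
    push_cast [Nat.cast_sub (by omega : 1 ≤ m)]; ring
  have hm0 : (m : ℝ) ≠ 0 := (hm_pos hm hc).ne'
  rw [F, G, hpow, S0]
  field_simp
  ring

lemma deriv_at_critical : (m : ℝ) * (-S0 m c) ^ (m - 1) - c = 0 := by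
  rw [(even_m_sub_one hm hc hmo).neg_pow, S0_pow hm hc]
  field_simp
  ring

lemma F_neg_one_odd : F m c (-1) = 2 * (c - 1) := by
  simp [F, hmo.neg_one_pow]; ring

lemma strictMonoOn_left : StrictMonoOn (F m c) (Set.Icc (-1 : ℝ) (-S0 m c)) := by
  apply strictMonoOn_of_deriv_pos (convex_Icc _ _) (contF m c).continuousOn
  intro x hx
  rw [interior_Icc] at hx
  rw [deriv_F]
  have hu : S0 m c < -x := by linarith [hx.2]
  have hx' : x ^ (m - 1) = (-x) ^ (m - 1) := ((even_m_sub_one hm hc hmo).neg_pow x).symm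
  have hp : S0 m c ^ (m - 1) < (-x) ^ (m - 1) :=
    pow_lt_pow_left₀ hu (S0_pos hm hc).le (by omega)
  rw [S0_pow hm hc] at hp
  have hmp := hm_pos hm hc
  rw [hx']
  have := (div_lt_iff₀ hmp).mp (by linarith : c / m < (-x) ^ (m-1))
  linarith [mul_comm ((-x) ^ (m-1)) (m : ℝ) ▸ this]

lemma strictAntiOn_right : StrictAntiOn (F m c) (Set.Icc (-S0 m c) 0) := by
  apply strictAntiOn_of_deriv_neg (convex_Icc _ _) (contF m c).continuousOn
  intro x hx
  rw [interior_Icc] at hx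
  rw [deriv_F]
  have hu0 : 0 < -x := by linarith [hx.2]
  have hu : -x < S0 m c := by linarith [hx.1]
  have hx' : x ^ (m - 1) = (-x) ^ (m - 1) := ((even_m_sub_one hm hc hmo).neg_pow x).symm
  have hp : (-x) ^ (m - 1) < S0 m c ^ (m - 1) :=
    pow_lt_pow_left₀ hu hu0.le (by omega)
  rw [S0_pow hm hc] at hp
  have hmp := hm_pos hm hc
  rw [hx']
  have := (lt_div_iff₀ hmp).mp hp
  nlinarith

/-- every root in (-1,0) is ≤ the critical value -/
lemma F_le_critical {t : ℝ} (ht : t ∈ Set.Ioo (-1 : ℝ) 0) :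
    F m c t ≤ F m c (-S0 m c) := by
  rcases le_or_gt t (-S0 m c) with h | h
  · rcases eq_or_lt_of_le h with rfl | h'
    · exact le_refl _
    · exact le_of_lt ((strictMonoOn_left hm hc hmo) (Set.mem_Icc.2 ⟨ht.1.le, h⟩)
        (Set.mem_Icc.2 ⟨by linarith [(neg_S0_mem hm hc).1], le_refl _⟩) h')
  · exact le_of_lt ((strictAntiOn_right hm hc hmo)
      (Set.mem_Icc.2 ⟨le_refl _, (neg_S0_mem hm hc).2.le⟩)
      (Set.mem_Icc.2 ⟨h.le, ht.2.le⟩) h)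

end

section CM
variable {m : ℕ} {c : ℝ} (hm : 3 ≤ m) (hc : c ∈ Set.Ioo (0 : ℝ) 1) (hmo : Odd m)
include hm hc hmo

omit hc hmo in
lemma G_strictMono : ∀ d1 d2 : ℝ, 0 < d1 → d1 < d2 → G m d1 < G m d2 := by
  intro d1 d2 h1 h12
  have hmp : (0 : ℝ) < m := by
    have : (3 : ℝ) ≤ m := by exact_mod_cast hm
    linarith
  have hep : 0 < ((m : ℝ) - 1)⁻¹ := by
    have : (3 : ℝ) ≤ m := by exact_mod_cast hm
    exact inv_pos.2 (by linarith)
  have hdiv : d1 / m < d2 / m := by gcongr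
  have hp12 : (d1 / m) ^ (((m : ℝ) - 1)⁻¹) < (d2 / m) ^ (((m : ℝ) - 1)⁻¹) :=
    Real.rpow_lt_rpow (by positivity) hdiv hep
  have hp1 : 0 < (d1 / m) ^ (((m : ℝ) - 1)⁻¹) := Real.rpow_pos_of_pos (by positivity) _
  have hk : 0 < ((m : ℝ) - 1) / m := by
    have h3 : (3 : ℝ) ≤ m := by exact_mod_cast hm
    apply div_pos <;> linarith
  have hmm : d1 * ((d1 / m) ^ (((m : ℝ) - 1)⁻¹)) < d2 * ((d2 / m) ^ (((m : ℝ) - 1)⁻¹)) :=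
    mul_lt_mul'' h12 hp12 h1.le hp1.le
  have := mul_lt_mul_of_pos_right hmm hk
  simp only [G]
  linarith

lemma G_cm_zero {cm : ℝ} (hcm : cm ∈ Set.Ioo (0 : ℝ) 1)
    (hE : (((m : ℝ) - 1) ^ (m - 1) / (m : ℝ) ^ m) * cm ^ m = (cm - 1) ^ (m - 1)) :
    G m cm = 0 := by
  have hmp : (0 : ℝ) < m := hm_pos hm hc
  have he : Even (m - 1) := even_m_sub_one hm hc hmo
  set A := cm * ((cm / m) ^ (((m : ℝ) - 1)⁻¹)) * (((m : ℝ) - 1) / m) with hA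
  have hApos : 0 < A := by
    have h1 : (0 : ℝ) < (cm / m) ^ (((m : ℝ) - 1)⁻¹) :=
      Real.rpow_pos_of_pos (div_pos hcm.1 hmp) _
    have h3 : (3 : ℝ) ≤ m := by exact_mod_cast hm
    have h2 : (0 : ℝ) < ((m : ℝ) - 1) / m := by apply div_pos <;> linarith
    have := hcm.1
    positivity
  have hBpos : (0 : ℝ) < 1 - cm := by linarith [hcm.2]
  have hpowS : ((cm / m) ^ (((m : ℝ) - 1)⁻¹)) ^ (m - 1) = cm / m := S0_pow hm hcm
  have hpow : A ^ (m - 1) = (1 - cm) ^ (m - 1) := by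
    have hmm : (m : ℝ) ^ m = (m : ℝ) ^ (m - 1) * m := by
      rw [← pow_succ, Nat.sub_add_cancel (by omega)]
    have hcc : cm ^ m = cm ^ (m - 1) * cm := by
      rw [← pow_succ, Nat.sub_add_cancel (by omega)]
    have step : A ^ (m - 1) = (((m : ℝ) - 1) ^ (m - 1) / (m : ℝ) ^ m) * cm ^ m := by
      rw [hA, mul_pow, mul_pow, hpowS, div_pow, hmm, hcc]
      field_simp
    rw [step, hE, show (cm - 1 : ℝ) = -(1 - cm) by ring, he.neg_pow]
  have hinj := (pow_left_strictMonoOn₀ (M₀ := ℝ) (n := m - 1) (by omega)).injOn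
  have : A = 1 - cm := hinj (Set.mem_Ici.2 hApos.le) (Set.mem_Ici.2 hBpos.le) hpow
  have hGA : G m cm = A - (1 - cm) := rfl
  rw [hGA, this]
  ring

end CM

section Count
variable {m : ℕ} {c : ℝ} (hm : 3 ≤ m) (hc : c ∈ Set.Ioo (0 : ℝ) 1) (hmo : Odd m)
include hm hc hmo

lemma two_roots (h : 0 < F m c (-S0 m c)) :
    {t : ℝ | t ≠ 1 ∧ (hpolyR m c).IsRoot t}.ncard = 2 := by
  set t0 := -S0 m c with ht0def
  have ht0 : t0 ∈ Set.Ioo (-1 : ℝ) 0 := neg_S0_mem hm hc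
  have hFm1 : F m c (-1) < 0 := by
    rw [F_neg_one_odd hm hc hmo]; linarith [hc.2]
  obtain ⟨a, haI, haF⟩ := intermediate_value_Ioo ht0.1.le (contF m c).continuousOn
    (Set.mem_Ioo.2 ⟨hFm1, h⟩)
  obtain ⟨b, hbI, hbF⟩ := intermediate_value_Ioo' ht0.2.le (contF m c).continuousOn
    (Set.mem_Ioo.2 ⟨F_zero hm hc, h⟩)
  have hab : a ≠ b := ne_of_lt (haI.2.trans hbI.1)
  have hset : {t : ℝ | t ≠ 1 ∧ (hpolyR m c).IsRoot t} = {a, b} := by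
    ext t
    simp only [Set.mem_setOf_eq, Set.mem_insert_iff, Set.mem_singleton_iff]
    constructor
    · rintro ⟨ht1, htr⟩
      rw [isRoot_iff] at htr
      have htI := root_mem hm hc htr ht1
      rcases lt_trichotomy t t0 with hlt | heq | hgt
      · left
        exact (strictMonoOn_left hm hc hmo).injOn ⟨htI.1.le, hlt.le⟩
          ⟨haI.1.le, haI.2.le⟩ (by rw [htr, haF])
      · exact absurd (heq ▸ htr) (ne_of_gt h)
      · right
        exact (strictAntiOn_right hm hc hmo).injOn ⟨hgt.le, htI.2.le⟩
          ⟨hbI.1.le, hbI.2.le⟩ (by rw [htr, hbF])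
    · rintro (rfl | rfl)
      · exact ⟨ne_of_lt (lt_trans (lt_trans haI.2 ht0.2) one_pos), (isRoot_iff m c _).2 haF⟩
      · exact ⟨ne_of_lt (lt_trans hbI.2 one_pos), (isRoot_iff m c _).2 hbF⟩
  rw [hset]
  exact Set.ncard_pair hab

lemma only_critical_root (h0 : F m c (-S0 m c) = 0) {t : ℝ} (ht1 : t ≠ 1)
    (htr : F m c t = 0) : t = -S0 m c := by
  set t0 := -S0 m c
  have ht0 : t0 ∈ Set.Ioo (-1 : ℝ) 0 := neg_S0_mem hm hc
  have htI := root_mem hm hc htr ht1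
  rcases lt_trichotomy t t0 with hlt | heq | hgt
  · have := (strictMonoOn_left hm hc hmo) ⟨htI.1.le, hlt.le⟩
      ⟨ht0.1.le, le_refl _⟩ hlt
    rw [htr, h0] at this; exact absurd this (lt_irrefl 0)
  · exact heq
  · have := (strictAntiOn_right hm hc hmo) ⟨le_refl _, ht0.2.le⟩
      ⟨hgt.le, htI.2.le⟩ hgt
    rw [htr, h0] at this; exact absurd this (lt_irrefl 0)

lemma unique_root_crit (h0 : F m c (-S0 m c) = 0) :
    ∃! t : ℝ, t ≠ 1 ∧ (hpolyR m c).IsRoot t := by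
  have ht0 : -S0 m c ∈ Set.Ioo (-1 : ℝ) 0 := neg_S0_mem hm hc
  refine ⟨-S0 m c, ⟨ne_of_lt (lt_trans ht0.2 one_pos), (isRoot_iff m c _).2 h0⟩, ?_⟩
  rintro t ⟨ht1, htr⟩
  exact only_critical_root hm hc hmo h0 ht1 ((isRoot_iff m c t).1 htr)

omit hmo in
lemma hpoly_ne_zero : hpolyR m c ≠ 0 := by
  intro h
  have h2 : F m c 2 = 0 := by rw [← eval_h, h]; simp
  have h8 : (8 : ℝ) ≤ 2 ^ m := by
    calc (8 : ℝ) = 2 ^ 3 := by norm_num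
    _ ≤ 2 ^ m := pow_le_pow_right₀ one_le_two hm
  have := hc.1; have := hc.2
  simp only [F] at h2
  nlinarith

lemma mult_two (h0 : F m c (-S0 m c) = 0) :
    ∀ t : ℝ, t ≠ 1 → (hpolyR m c).IsRoot t → (hpolyR m c).rootMultiplicity t = 2 := by
  intro t ht1 htr
  have htt0 : t = -S0 m c := only_critical_root hm hc hmo h0 ht1 ((isRoot_iff m c t).1 htr)
  have hne := hpoly_ne_zero hm hc
  have hlow : 1 < (hpolyR m c).rootMultiplicity t := by
    rw [one_lt_rootMultiplicity_iff_isRoot hne]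
    refine ⟨htr, ?_⟩
    rw [IsRoot, deriv_h, htt0]
    exact deriv_at_critical hm hc hmo
  have hupp : ¬ 2 < (hpolyR m c).rootMultiplicity t := by
    intro hlt
    have hroot2 : ((Polynomial.derivative)^[2] (hpolyR m c)).IsRoot t :=
      isRoot_iterate_derivative_of_lt_rootMultiplicity hlt
    have hit : (Polynomial.derivative)^[2] (hpolyR m c) =
        (hpolyR m c).derivative.derivative := rfl
    rw [hit, IsRoot, deriv2_h m (by omega) c t] at hroot2
    have hmne : (m : ℝ) ≠ 0 := by
      simp only [ne_eq, Nat.cast_eq_zero]; omega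
    have hm1ne : ((m - 1 : ℕ) : ℝ) ≠ 0 := by
      simp only [ne_eq, Nat.cast_eq_zero]; omega
    have htne : t ≠ 0 := by
      rw [htt0]; exact neg_ne_zero.2 (S0_pos hm hc).ne'
    exact (mul_ne_zero hmne (mul_ne_zero hm1ne (pow_ne_zero _ htne))) hroot2
  omega

lemma no_root (hneg : F m c (-S0 m c) < 0) :
    ∀ t : ℝ, (hpolyR m c).IsRoot t → t = 1 := by
  intro t htr
  by_contra ht1
  have htF := (isRoot_iff m c t).1 htr
  have htI := root_mem hm hc htF ht1
  have := F_le_critical hm hc hmo htI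
  rw [htF] at this
  linarith

end Count
end Stmt9Aux

open Stmt9Aux

/-- Let `m ≥ 3`, `c ∈ (0,1)`, `h(t) = t^m - c·t - (1-c)`.  Then `1` is a root of `h` and every
real root of `h` other than `1` lies in `(-1,0)`.  If `m` is even, `h` has exactly one real root
other than `1`.  If `m` is odd then, with `c_m` the unique root in `(0,1)` of
`((m-1)^{m-1}/m^m)·t^m = (t-1)^{m-1}`: for `c > c_m` there are exactly two real roots other
than `1`; for `c = c_m` exactly one (a double root); for `c < c_m` none. -/
theorem stmt_9 (m : ℕ) (hm : 3 ≤ m) (c : ℝ) (hc : c ∈ Set.Ioo (0 : ℝ) 1) :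
    (hpolyR m c).IsRoot 1 ∧
    (∀ t : ℝ, (hpolyR m c).IsRoot t → t ≠ 1 → t ∈ Set.Ioo (-1 : ℝ) 0) ∧
    (Even m → ∃! t : ℝ, t ≠ 1 ∧ (hpolyR m c).IsRoot t) ∧
    (Odd m → ∀ cm : ℝ, cm ∈ Set.Ioo (0 : ℝ) 1 →
      (((m : ℝ) - 1) ^ (m - 1) / (m : ℝ) ^ m) * cm ^ m = (cm - 1) ^ (m - 1) →
      ((cm < c → {t : ℝ | t ≠ 1 ∧ (hpolyR m c).IsRoot t}.ncard = 2) ∧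
       (c = cm → (∃! t : ℝ, t ≠ 1 ∧ (hpolyR m c).IsRoot t) ∧
          (∀ t : ℝ, t ≠ 1 → (hpolyR m c).IsRoot t → (hpolyR m c).rootMultiplicity t = 2)) ∧
       (c < cm → ∀ t : ℝ, (hpolyR m c).IsRoot t → t = 1))) := by
  refine ⟨(isRoot_iff m c 1).2 (F_one hm hc), ?_, ?_, ?_⟩
  · intro t htr ht1
    exact root_mem hm hc ((isRoot_iff m c t).1 htr) ht1
  · intro hme
    exact even_case hm hc hme
  · intro hmo cm hcm hE
    have hG0 : G m cm = 0 := G_cm_zero hm hc hmo hcm hE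
    have hFc : F m c (-S0 m c) = G m c := F_at_critical hm hc hmo
    refine ⟨?_, ?_, ?_⟩
    · intro hlt
      have hpos : 0 < F m c (-S0 m c) := by
        rw [hFc]
        have := G_strictMono hm cm c hcm.1 hlt
        linarith
      exact two_roots hm hc hmo hpos
    · intro hceq
      have h0 : F m c (-S0 m c) = 0 := by rw [hFc, hceq, hG0]
      exact ⟨unique_root_crit hm hc hmo h0, mult_two hm hc hmo h0⟩
    · intro hlt
      have hneg : F m c (-S0 m c) < 0 := by
        rw [hFc]
        have := G_strictMono hm c cm hc.1 hlt
        linarith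
      exact no_root hm hc hmo hneg
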